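/- One-dimensional density claim: let λ ∈ [1/2, 1), μ ∈ (0,1), and define families of subintervals of [0,1] by 𝒯₀ = {[0,μ], [1−μ,1]} and 𝒯_{j+1} = {λI₁ + (1−λ)I₂ : I₁, I₂ ∈ 𝒯_j} (Minkowski weighted sums). Then for every α ∈ (0,1) and ℓ = ⌈log((1−α)μ)/log(λ)⌉, every subinterval of [0,1] of length αμ is contained in some interval of 𝒯_ℓ. -/

import Mathlib

open MeasureTheory Set
open scoped ENNReal Pointwise

/-- The families of subintervals of `[0,1]`: `𝒯₀ = {[0,μ], [1-μ,1]}` and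
`𝒯_{j+1}` consists of Minkowski weighted sums `λI₁ + (1-λ)I₂` of members of `𝒯_j`. -/
def intervalFamily (lam mu : ℝ) : ℕ → Set (Set ℝ)
  | 0 => {Set.Icc 0 mu, Set.Icc (1 - mu) 1}
  | (j + 1) => {I | ∃ I1 ∈ intervalFamily lam mu j, ∃ I2 ∈ intervalFamily lam mu j,
      I = lam • I1 + (1 - lam) • I2}

/-- Left-endpoint parameters (rescaled to `[0,1]`). -/
def Apts (lam : ℝ) : ℕ → Set ℝ
  | 0 => {0, 1}
  | (j + 1) => {x | ∃ s ∈ Apts lam j, ∃ u ∈ Apts lam j, x = lam * s + (1 - lam) * u}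

lemma zero_mem_Apts (lam : ℝ) : ∀ j, (0:ℝ) ∈ Apts lam j
  | 0 => Or.inl rfl
  | (j+1) => ⟨0, zero_mem_Apts lam j, 0, zero_mem_Apts lam j, by ring⟩

lemma one_mem_Apts (lam : ℝ) : ∀ j, (1:ℝ) ∈ Apts lam j
  | 0 => Or.inr rfl
  | (j+1) => ⟨1, one_mem_Apts lam j, 1, one_mem_Apts lam j, by ring⟩

lemma myIcc_add_Icc {a b c d : ℝ} (hab : a ≤ b) (hcd : c ≤ d) :
    Icc a b + Icc c d = Icc (a + c) (b + d) := by
  ext x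
  constructor
  · rintro ⟨u, hu, v, hv, rfl⟩
    simp only [mem_Icc] at *
    constructor <;> linarith [hu.1, hu.2, hv.1, hv.2]
  · intro hx
    simp only [mem_Icc] at hx
    refine ⟨max a (x - d), ?_, x - max a (x - d), ?_, by ring⟩
    · simp only [mem_Icc]
      constructor
      · exact le_max_left _ _
      · exact max_le hab (by linarith [hx.2])
    · simp only [mem_Icc]
      rcases le_total a (x - d) with h | h
      · rw [max_eq_right h]; constructor <;> linarith [hx.1, hx.2]
      · rw [max_eq_left h]; constructor <;> linarith [hx.1, hx.2]

lemma family_mem (lam mu : ℝ) (hl0 : 0 < lam) (hl1 : lam < 1) (hmu : 0 < mu) :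
    ∀ j, ∀ t ∈ Apts lam j,
      Icc ((1 - mu) * t) ((1 - mu) * t + mu) ∈ intervalFamily lam mu j := by
  intro j
  induction j with
  | zero =>
    rintro t (rfl | rfl)
    · left; norm_num
    · right
      have : (1 - mu) * 1 = 1 - mu := by ring
      rw [this]
      norm_num [intervalFamily]
  | succ j ih =>
    rintro t ⟨s, hs, u, hu, rfl⟩
    refine ⟨_, ih s hs, _, ih u hu, ?_⟩
    rw [LinearOrderedField.smul_Icc hl0, LinearOrderedField.smul_Icc (by linarith : (0:ℝ) < 1 - lam)]
    rw [myIcc_add_Icc (by nlinarith) (by nlinarith)]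
    congr 1 <;> · ring

lemma net (lam : ℝ) (h1 : 1/2 ≤ lam) (h2 : lam < 1) :
    ∀ j, ∀ x : ℝ, 0 ≤ x → x ≤ 1 → ∃ t ∈ Apts lam j, t ≤ x ∧ x - t ≤ lam ^ j := by
  have hl0 : (0:ℝ) < lam := by linarith
  intro j
  induction j with
  | zero =>
    intro x hx hx1
    exact ⟨0, zero_mem_Apts lam 0, hx, by rw [pow_zero]; linarith⟩
  | succ j ih =>
    intro x hx hx1
    rcases le_total x lam with hc | hc
    · obtain ⟨t, ht, htx, htd⟩ := ih (x / lam) (by positivity) (by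
        rw [div_le_one hl0]; exact hc)
      refine ⟨lam * t, ⟨t, ht, 0, zero_mem_Apts lam j, by ring⟩, ?_, ?_⟩
      · calc lam * t ≤ lam * (x / lam) := by nlinarith
          _ = x := by field_simp
      · have : x / lam - t ≤ lam ^ j := htd
        have h3 : x - lam * t = lam * (x / lam - t) := by field_simp
        rw [h3, pow_succ, mul_comm (lam ^ j) lam]
        nlinarith
    · obtain ⟨t, ht, htx, htd⟩ := ih ((x - (1 - lam)) / lam)
        (by apply div_nonneg _ hl0.le; linarith)
        (by rw [div_le_one hl0]; linarith)
      refine ⟨lam * t + (1 - lam), ⟨t, ht, 1, one_mem_Apts lam j, by ring⟩, ?_, ?_⟩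
      · have := mul_le_mul_of_nonneg_left htx hl0.le
        rw [mul_div_cancel₀ _ hl0.ne'] at this
        linarith
      · have h3 : x - (lam * t + (1 - lam)) = lam * ((x - (1 - lam)) / lam - t) := by
          field_simp; ring
        rw [h3, pow_succ, mul_comm (lam ^ j) lam]
        nlinarith

/-- One-dimensional density claim: for `λ ∈ [1/2,1)`, `μ ∈ (0,1)`, `α ∈ (0,1)` and
`ℓ = ⌈log((1-α)μ)/log(λ)⌉`, every subinterval of `[0,1]` of length `αμ` is contained
in some interval of `𝒯_ℓ`. -/
theorem stmt7 (lam mu : ℝ) (hlam : lam ∈ Set.Ico (1/2 : ℝ) 1)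
    (hmu : mu ∈ Set.Ioo (0:ℝ) 1) (α : ℝ) (hα : α ∈ Set.Ioo (0:ℝ) 1)
    (ℓ : ℕ) (hℓ : (ℓ : ℤ) = ⌈Real.log ((1 - α) * mu) / Real.log lam⌉)
    (a : ℝ) (ha : 0 ≤ a) (ha' : a + α * mu ≤ 1) :
    ∃ I ∈ intervalFamily lam mu ℓ, Set.Icc a (a + α * mu) ⊆ I := by
  obtain ⟨hl1, hl2⟩ := hlam
  obtain ⟨hm1, hm2⟩ := hmu
  obtain ⟨hα1, hα2⟩ := hα
  have hl0 : (0:ℝ) < lam := by linarith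
  -- key: lam ^ ℓ ≤ (1 - α) * mu
  have hpos : (0:ℝ) < (1 - α) * mu := by nlinarith
  have hkey : lam ^ ℓ ≤ (1 - α) * mu := by
    have hlog : Real.log lam < 0 := Real.log_neg hl0 hl2
    have hceil : (Real.log ((1 - α) * mu) / Real.log lam : ℝ) ≤ (ℓ : ℝ) := by
      have := Int.le_ceil (Real.log ((1 - α) * mu) / Real.log lam)
      rw [← hℓ] at this
      exact_mod_cast this
    have h4 : (ℓ : ℝ) * Real.log lam ≤ Real.log ((1 - α) * mu) := by
      have := mul_le_mul_of_nonpos_right hceil hlog.le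
      rwa [div_mul_cancel₀ _ hlog.ne] at this
    have h5 : Real.log (lam ^ ℓ) ≤ Real.log ((1 - α) * mu) := by
      rw [Real.log_pow]; exact_mod_cast h4
    calc lam ^ ℓ = Real.exp (Real.log (lam ^ ℓ)) :=
          (Real.exp_log (by positivity)).symm
      _ ≤ Real.exp (Real.log ((1 - α) * mu)) := Real.exp_le_exp.mpr h5
      _ = (1 - α) * mu := Real.exp_log hpos
  rcases le_total a (1 - mu) with hcase | hcase
  · obtain ⟨t, ht, htx, htd⟩ := net lam hl1 hl2 ℓ (a / (1 - mu))
      (by apply div_nonneg ha; linarith) (by rw [div_le_one (by linarith)]; linarith)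
    refine ⟨_, family_mem lam mu hl0 hl2 hm1 ℓ t ht, ?_⟩
    have hp1 : (1 - mu) * t ≤ a := by
      have := mul_le_mul_of_nonneg_left htx (by linarith : (0:ℝ) ≤ 1 - mu)
      rwa [mul_div_cancel₀ _ (by linarith : (1:ℝ) - mu ≠ 0)] at this
    have hp2 : a + α * mu ≤ (1 - mu) * t + mu := by
      have hne : (1:ℝ) - mu ≠ 0 := by linarith
      have h6 : a - (1 - mu) * t = (1 - mu) * (a / (1 - mu) - t) := by
        field_simp
      have h7 : (1 - mu) * (a / (1 - mu) - t) ≤ (1 - mu) * lam ^ ℓ :=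
        mul_le_mul_of_nonneg_left htd (by linarith)
      have h8 : (1 - mu) * lam ^ ℓ ≤ lam ^ ℓ := by nlinarith [pow_pos hl0 ℓ]
      nlinarith
    intro x hx
    exact ⟨le_trans hp1 hx.1, le_trans hx.2 hp2⟩
  · refine ⟨_, family_mem lam mu hl0 hl2 hm1 ℓ 1 (one_mem_Apts lam ℓ), ?_⟩
    intro x hx
    rw [mem_Icc] at hx ⊢
    constructor <;> nlinarith [hx.1, hx.2]
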